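/- Sylvester's identity: Let q, x be complex numbers with |q| < 1 and x q^j ≠ 1 for every integer j ≥ 1. Then ∑_{k=0}^∞ (−1)^k q^{k(3k+1)/2} x^k (1 − x q^{2k+1}) / ((q;q)_k · (x q^{k+1};q)_∞) = 1, the series converging absolutely. -/

import Mathlib

/-- The finite q-Pochhammer symbol `(a; q)_k = ∏_{i=0}^{k-1} (1 - a q^i)`. -/
noncomputable def qPoch (q a : ℂ) (k : ℕ) : ℂ := ∏ i ∈ Finset.range k, (1 - a * q ^ i)

/-- The infinite q-Pochhammer symbol `(a; q)_∞ = ∏_{i=0}^{∞} (1 - a q^i)`. -/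
noncomputable def qPochInf (q a : ℂ) : ℂ := ∏' i : ℕ, (1 - a * q ^ i)

set_option maxHeartbeats 1000000

open Finset Filter Complex Topology

namespace SylAux

def om (k : ℕ) : ℕ := k * (3 * k + 1) / 2

lemma om_two (k : ℕ) : 2 * om k = k * (3 * k + 1) := by
  have h : 2 ∣ k * (3 * k + 1) := by
    rcases Nat.even_or_odd k with h | h
    · exact Dvd.dvd.mul_right h.two_dvd _
    · obtain ⟨m, hm⟩ := h
      exact Dvd.dvd.mul_left ⟨3 * m + 2, by omega⟩ k
  exact Nat.mul_div_cancel' h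

lemma om_succ (k : ℕ) : om (k + 1) = om k + (3 * k + 2) := by
  have h1 := om_two k
  have h2 := om_two (k + 1)
  have h3 : (k + 1) * (3 * (k + 1) + 1) = k * (3 * k + 1) + (6 * k + 4) := by ring
  omega

lemma om_ge (k : ℕ) : k * k ≤ om k := by
  have h1 := om_two k
  have h2 : k * (3 * k + 1) = 2 * (k * k) + (k * k + k) := by ring
  omega

lemma one_sub_ne {a : ℂ} (h : ‖a‖ < 1) : (1 : ℂ) - a ≠ 0 := by
  intro h0
  have : a = 1 := by linear_combination -h0
  rw [this] at h
  simp at h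

variable {q : ℂ}

lemma qfac_ne (hq : ‖q‖ < 1) (i : ℕ) : (1 : ℂ) - q * q ^ i ≠ 0 := by
  apply one_sub_ne
  rw [norm_mul, norm_pow]
  calc ‖q‖ * ‖q‖ ^ i ≤ ‖q‖ * 1 := by
        gcongr
        exact pow_le_one₀ (norm_nonneg q) hq.le
    _ < 1 := by simpa using hq

lemma qPoch_q_ne (hq : ‖q‖ < 1) (k : ℕ) : qPoch q q k ≠ 0 :=
  Finset.prod_ne_zero_iff.2 fun i _ => qfac_ne hq i

lemma exists_pow_small (hq : ‖q‖ < 1) (Y c : ℝ) (hc : 0 < c) :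
    ∃ N : ℕ, 1 ≤ N ∧ Y * ‖q‖ ^ N ≤ c := by
  have h : Tendsto (fun n : ℕ => Y * ‖q‖ ^ n) atTop (𝓝 (Y * 0)) :=
    (tendsto_pow_atTop_nhds_zero_of_lt_one (norm_nonneg q) hq).const_mul Y
  rw [mul_zero] at h
  obtain ⟨N, hN⟩ := (h.eventually_le_const hc).exists_forall_of_atTop
  exact ⟨max N 1, le_max_right _ _, hN _ (le_max_left _ _)⟩

lemma multipliable_aux (hq : ‖q‖ < 1) (y : ℂ) (h0 : ∀ i : ℕ, (1 : ℂ) - y * q ^ i ≠ 0) :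
    Multipliable (fun i : ℕ => 1 - y * q ^ i) := by
  apply Complex.multipliable_of_summable_log
  obtain ⟨N, hN1, hN⟩ := exists_pow_small hq ‖y‖ (1 / 2) (by norm_num)
  rw [← summable_nat_add_iff N]
  apply Summable.of_norm_bounded (g := fun n => 3 / 2 * (‖y‖ * ‖q‖ ^ N) * ‖q‖ ^ n)
    (((summable_geometric_of_lt_one (norm_nonneg q) hq).mul_left _))
  intro n
  have hyq : ∀ m : ℕ, N ≤ m → ‖y * q ^ m‖ ≤ ‖y‖ * ‖q‖ ^ N := by
    intro m hm
    rw [norm_mul, norm_pow]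
    exact mul_le_mul_of_nonneg_left (pow_le_pow_of_le_one (norm_nonneg q) hq.le hm)
      (norm_nonneg y)
  have h1 : ‖-(y * q ^ (n + N))‖ ≤ 1 / 2 := by
    rw [norm_neg]
    exact (hyq _ (by omega)).trans hN
  have h2 := Complex.norm_log_one_add_half_le_self h1
  have h3 : (1 : ℂ) + -(y * q ^ (n + N)) = 1 - y * q ^ (n + N) := by ring
  rw [h3] at h2
  calc ‖Complex.log (1 - y * q ^ (n + N))‖ ≤ 3 / 2 * ‖-(y * q ^ (n + N))‖ := h2
    _ = 3 / 2 * (‖y‖ * ‖q‖ ^ N) * ‖q‖ ^ n := by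
        rw [norm_neg, norm_mul, norm_pow, show n + N = N + n by omega, pow_add]
        ring

lemma qPochInf_shift (hq : ‖q‖ < 1) (y : ℂ) (h0 : ∀ i : ℕ, (1 : ℂ) - y * q ^ i ≠ 0) (k : ℕ) :
    qPochInf q y = qPoch q y k * qPochInf q (y * q ^ k) := by
  have key : ∀ i : ℕ, (1 : ℂ) - y * q ^ (i + k) = 1 - y * q ^ k * q ^ i := by
    intro i; rw [pow_add]; ring
  have hm : Multipliable (fun n : ℕ => (1 : ℂ) - y * q ^ (n + k)) := by
    apply (multipliable_aux hq (y * q ^ k) ?_).congr fun n => (key n).symm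
    intro i
    rw [← key i]
    exact h0 (i + k)
  have := Multipliable.prod_mul_tprod_nat_mul' (f := fun i : ℕ => (1 : ℂ) - y * q ^ i) (k := k) hm
  rw [qPochInf, ← this, qPoch, qPochInf]
  congr 1
  exact tprod_congr key

lemma prod_one_add_le_exp (u : ℕ → ℝ) (hu : ∀ i, 0 ≤ u i) (n : ℕ) :
    ∏ i ∈ range n, (1 + u i) ≤ Real.exp (∑ i ∈ range n, u i) := by
  rw [Real.exp_sum]
  apply Finset.prod_le_prod
  · intro i _
    have := hu i
    linarith
  · intro i _
    have := Real.add_one_le_exp (u i)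
    linarith

lemma norm_prod_sub_one_le (u : ℕ → ℂ) (n : ℕ) :
    ‖(∏ i ∈ range n, (1 - u i)) - 1‖ ≤ (∏ i ∈ range n, (1 + ‖u i‖)) - 1 := by
  induction n with
  | zero => simp
  | succ n ih =>
    rw [prod_range_succ, prod_range_succ]
    have hP : (1 : ℝ) ≤ ∏ i ∈ range n, (1 + ‖u i‖) :=
      calc (1 : ℝ) = ∏ _i ∈ range n, 1 := by simp
        _ ≤ ∏ i ∈ range n, (1 + ‖u i‖) :=
            Finset.prod_le_prod (fun i _ => zero_le_one)
              (fun i _ => le_add_of_nonneg_right (norm_nonneg _))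
    have key : (∏ i ∈ range n, (1 - u i)) * (1 - u n) - 1
        = ((∏ i ∈ range n, (1 - u i)) - 1) * (1 - u n) - u n := by ring
    rw [key]
    calc ‖((∏ i ∈ range n, (1 - u i)) - 1) * (1 - u n) - u n‖
        ≤ ‖((∏ i ∈ range n, (1 - u i)) - 1) * (1 - u n)‖ + ‖u n‖ := norm_sub_le _ _
      _ ≤ ((∏ i ∈ range n, (1 + ‖u i‖)) - 1) * (1 + ‖u n‖) + ‖u n‖ := by
          rw [norm_mul]
          have hB : ‖(1 : ℂ) - u n‖ ≤ 1 + ‖u n‖ := by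
            calc ‖(1 : ℂ) - u n‖ ≤ ‖(1 : ℂ)‖ + ‖u n‖ := norm_sub_le _ _
              _ = 1 + ‖u n‖ := by simp
          exact add_le_add_left
            (mul_le_mul ih hB (norm_nonneg _) (by linarith)) _
      _ ≤ (∏ i ∈ range n, (1 + ‖u i‖)) * (1 + ‖u n‖) - 1 := by nlinarith [norm_nonneg (u n)]

lemma exp_half_lt_two : Real.exp (1 / 2) < 2 := by
  have h1 : Real.exp (1 / 2) * Real.exp (1 / 2) = Real.exp 1 := by
    rw [← Real.exp_add]; norm_num
  nlinarith [Real.exp_one_lt_d9, Real.exp_pos (1 / 2 : ℝ)]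

lemma geom_partial_le (hq : ‖q‖ < 1) (n : ℕ) :
    ∑ i ∈ range n, ‖q‖ ^ i ≤ (1 - ‖q‖)⁻¹ := by
  have hs := summable_geometric_of_lt_one (norm_nonneg q) hq
  calc ∑ i ∈ range n, ‖q‖ ^ i ≤ ∑' i : ℕ, ‖q‖ ^ i :=
        Summable.sum_le_tsum _ (fun i _ => by positivity) hs
    _ = (1 - ‖q‖)⁻¹ := tsum_geometric_of_lt_one (norm_nonneg q) hq

lemma qPochInf_ne_zero_small (hq : ‖q‖ < 1) (y : ℂ) (hy : ‖y‖ ≤ (1 - ‖q‖) / 2) :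
    qPochInf q y ≠ 0 := by
  have hq1 : (0 : ℝ) < 1 - ‖q‖ := by linarith
  have hy1 : ‖y‖ < 1 := by nlinarith [norm_nonneg q]
  have h0 : ∀ i : ℕ, (1 : ℂ) - y * q ^ i ≠ 0 := by
    intro i
    apply one_sub_ne
    rw [norm_mul, norm_pow]
    calc ‖y‖ * ‖q‖ ^ i ≤ ‖y‖ * 1 :=
          mul_le_mul_of_nonneg_left (pow_le_one₀ (norm_nonneg q) hq.le) (norm_nonneg y)
      _ < 1 := by rwa [mul_one]
  have hbound : ∀ n : ℕ, ‖(∏ i ∈ range n, (1 - y * q ^ i)) - 1‖ ≤ Real.exp (1 / 2) - 1 := by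
    intro n
    refine (norm_prod_sub_one_le _ n).trans ?_
    have h1 : ∏ i ∈ range n, (1 + ‖y * q ^ i‖) ≤ Real.exp (∑ i ∈ range n, ‖y * q ^ i‖) :=
      prod_one_add_le_exp _ (fun i => norm_nonneg _) n
    have h2 : ∑ i ∈ range n, ‖y * q ^ i‖ ≤ 1 / 2 := by
      have hsn : (0 : ℝ) ≤ ∑ i ∈ range n, ‖q‖ ^ i :=
        Finset.sum_nonneg fun i _ => by positivity
      calc ∑ i ∈ range n, ‖y * q ^ i‖ = ‖y‖ * ∑ i ∈ range n, ‖q‖ ^ i := by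
            rw [Finset.mul_sum]
            exact Finset.sum_congr rfl fun i _ => by rw [norm_mul, norm_pow]
        _ ≤ ((1 - ‖q‖) / 2) * (1 - ‖q‖)⁻¹ :=
            mul_le_mul hy (geom_partial_le hq n) hsn (by positivity)
        _ = 1 / 2 := by rw [div_mul_eq_mul_div, mul_inv_cancel₀ hq1.ne']
    have h3 := Real.exp_le_exp.mpr h2
    linarith [h1.trans h3]
  have hm := multipliable_aux hq y h0
  have ht : Tendsto (fun n => ∏ i ∈ range n, ((1 : ℂ) - y * q ^ i)) atTop (𝓝 (qPochInf q y)) :=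
    hm.hasProd.tendsto_prod_nat
  have hle : ‖qPochInf q y - 1‖ ≤ Real.exp (1 / 2) - 1 :=
    le_of_tendsto ((ht.sub_const 1).norm) (Filter.Eventually.of_forall hbound)
  intro h
  rw [h] at hle
  simp only [zero_sub, norm_neg, norm_one] at hle
  linarith [exp_half_lt_two]

lemma qPochInf_ne_zero (hq : ‖q‖ < 1) (y : ℂ) (h0 : ∀ i : ℕ, (1 : ℂ) - y * q ^ i ≠ 0) :
    qPochInf q y ≠ 0 := by
  have hq1 : (0 : ℝ) < 1 - ‖q‖ := by linarith
  obtain ⟨N, _, hN⟩ := exists_pow_small hq ‖y‖ ((1 - ‖q‖) / 2) (by positivity)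
  rw [qPochInf_shift hq y h0 N]
  apply mul_ne_zero
  · exact Finset.prod_ne_zero_iff.2 fun i _ => h0 i
  · apply qPochInf_ne_zero_small hq
    rw [norm_mul, norm_pow]
    exact hN

lemma prod_one_sub_ge (a : ℕ → ℝ) (ha : ∀ i, 0 ≤ a i ∧ a i ≤ 1) (m : ℕ) :
    ∀ n : ℕ, 1 - ∑ i ∈ range n, a (m + i) ≤ ∏ i ∈ range n, (1 - a (m + i)) := by
  intro n
  induction n with
  | zero => simp
  | succ n ih =>
    rw [prod_range_succ, sum_range_succ]
    have h1 := (ha (m + n)).1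
    have h2 := (ha (m + n)).2
    have hs : 0 ≤ ∑ i ∈ range n, a (m + i) :=
      Finset.sum_nonneg fun i _ => (ha (m + i)).1
    nlinarith

lemma exists_qq_lower (hq : ‖q‖ < 1) :
    ∃ c : ℝ, 0 < c ∧ ∀ k, c ≤ ∏ i ∈ range k, (1 - ‖q‖ ^ (i + 1)) := by
  have hq1 : (0 : ℝ) < 1 - ‖q‖ := by linarith
  have hfac : ∀ i : ℕ, 0 < 1 - ‖q‖ ^ (i + 1) := by
    intro i
    have : ‖q‖ ^ (i + 1) ≤ ‖q‖ * 1 := by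
      rw [pow_succ, mul_comm]
      exact mul_le_mul_of_nonneg_left (pow_le_one₀ (norm_nonneg q) hq.le) (norm_nonneg q)
    nlinarith
  have hfac1 : ∀ i : ℕ, 1 - ‖q‖ ^ (i + 1) ≤ 1 := by
    intro i
    have : (0:ℝ) ≤ ‖q‖ ^ (i+1) := by positivity
    linarith
  obtain ⟨K, _, hK⟩ := exists_pow_small hq ((1 - ‖q‖)⁻¹) (1 / 2) (by norm_num)
  set PK := ∏ i ∈ range K, (1 - ‖q‖ ^ (i + 1)) with hPK
  have hPKpos : 0 < PK := Finset.prod_pos fun i _ => hfac i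
  refine ⟨PK / 2, by positivity, fun k => ?_⟩
  rcases le_or_gt k K with h | h
  · have : PK ≤ ∏ i ∈ range k, (1 - ‖q‖ ^ (i + 1)) := by
      obtain ⟨m, rfl⟩ := Nat.exists_eq_add_of_le h
      rw [hPK, prod_range_add]
      have hpos : 0 < ∏ i ∈ range k, (1 - ‖q‖ ^ (i + 1)) := Finset.prod_pos fun i _ => hfac i
      have hle1 : ∏ i ∈ range m, (1 - ‖q‖ ^ (k + i + 1)) ≤ 1 := by
        calc ∏ i ∈ range m, (1 - ‖q‖ ^ (k + i + 1)) ≤ ∏ _i ∈ range m, 1 :=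
              Finset.prod_le_prod (fun i _ => (hfac _).le) (fun i _ => hfac1 _)
          _ = 1 := by simp
      nlinarith
    linarith
  · obtain ⟨m, rfl⟩ := Nat.exists_eq_add_of_le h.le
    rw [prod_range_add, ← hPK]
    have htail : (1 : ℝ) / 2 ≤ ∏ i ∈ range m, (1 - ‖q‖ ^ (K + i + 1)) := by
      have hsum : ∑ i ∈ range m, ‖q‖ ^ (K + i + 1) ≤ 1 / 2 := by
        have : ∀ i, ‖q‖ ^ (K + i + 1) = ‖q‖ ^ (K + 1) * ‖q‖ ^ i := by
          intro i
          rw [← pow_add]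
          congr 1
          omega
        calc ∑ i ∈ range m, ‖q‖ ^ (K + i + 1)
            = ‖q‖ ^ (K + 1) * ∑ i ∈ range m, ‖q‖ ^ i := by
              rw [Finset.mul_sum]
              exact Finset.sum_congr rfl fun i _ => this i
          _ ≤ ‖q‖ ^ (K + 1) * (1 - ‖q‖)⁻¹ := by
              apply mul_le_mul_of_nonneg_left (geom_partial_le hq m) (by positivity)
          _ ≤ ‖q‖ ^ K * (1 - ‖q‖)⁻¹ := by
              apply mul_le_mul_of_nonneg_right
                (pow_le_pow_of_le_one (norm_nonneg q) hq.le (by omega)) (by positivity)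
          _ ≤ 1 / 2 := by
              calc ‖q‖ ^ K * (1 - ‖q‖)⁻¹ = (1 - ‖q‖)⁻¹ * ‖q‖ ^ K := by ring
                _ ≤ 1 / 2 := hK
      have hb2 : 1 - ∑ i ∈ range m, ‖q‖ ^ (K + i + 1)
          ≤ ∏ i ∈ range m, (1 - ‖q‖ ^ (K + i + 1)) := by
        have := prod_one_sub_ge (fun j => ‖q‖ ^ (j + 1))
          (fun j => ⟨by positivity, by linarith [hfac j]⟩) K m
        simpa using this
      linarith
    calc PK / 2 = PK * (1 / 2) := by ring
      _ ≤ PK * ∏ i ∈ range m, (1 - ‖q‖ ^ (K + i + 1)) :=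
          mul_le_mul_of_nonneg_left htail hPKpos.le
  
lemma qPoch_q_lower (hq : ‖q‖ < 1) (k : ℕ) :
    ∏ i ∈ range k, (1 - ‖q‖ ^ (i + 1)) ≤ ‖qPoch q q k‖ := by
  rw [qPoch, norm_prod]
  apply Finset.prod_le_prod
  · intro i _
    have : ‖q‖ ^ (i + 1) ≤ ‖q‖ := by
      calc ‖q‖ ^ (i+1) ≤ ‖q‖ ^ 1 := pow_le_pow_of_le_one (norm_nonneg q) hq.le (by omega)
        _ = ‖q‖ := pow_one _
    linarith
  · intro i _
    calc 1 - ‖q‖ ^ (i + 1) = 1 - ‖q * q ^ i‖ := by rw [norm_mul, norm_pow, pow_succ, mul_comm]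
      _ ≤ ‖(1 : ℂ) - q * q ^ i‖ := by
          have := norm_sub_norm_le (1 : ℂ) (q * q ^ i)
          simpa using this

lemma qPoch_shift_norm_le (hq : ‖q‖ < 1) {y : ℂ} {Y : ℝ} (hy : ‖y‖ ≤ Y) (m : ℕ) :
    ‖qPoch q (y * q) m‖ ≤ Real.exp (Y * (1 - ‖q‖)⁻¹) := by
  have hq1 : (0 : ℝ) < 1 - ‖q‖ := by linarith
  have hY : 0 ≤ Y := (norm_nonneg y).trans hy
  rw [qPoch, norm_prod]
  calc ∏ i ∈ range m, ‖(1 : ℂ) - y * q * q ^ i‖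
      ≤ ∏ i ∈ range m, (1 + ‖y * q * q ^ i‖) :=
        Finset.prod_le_prod (fun i _ => norm_nonneg _)
          (fun i _ => (norm_sub_le _ _).trans (by simp))
    _ ≤ Real.exp (∑ i ∈ range m, ‖y * q * q ^ i‖) :=
        prod_one_add_le_exp _ (fun i => norm_nonneg _) m
    _ ≤ Real.exp (Y * (1 - ‖q‖)⁻¹) := by
        apply Real.exp_le_exp.mpr
        have h1 : ∀ i : ℕ, ‖y * q * q ^ i‖ ≤ Y * ‖q‖ ^ i := by
          intro i
          rw [norm_mul, norm_mul, norm_pow]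
          calc ‖y‖ * ‖q‖ * ‖q‖ ^ i ≤ Y * 1 * ‖q‖ ^ i := by
                apply mul_le_mul_of_nonneg_right _ (by positivity)
                exact mul_le_mul hy hq.le (norm_nonneg q) hY
            _ = Y * ‖q‖ ^ i := by ring
        calc ∑ i ∈ range m, ‖y * q * q ^ i‖ ≤ ∑ i ∈ range m, Y * ‖q‖ ^ i :=
              Finset.sum_le_sum fun i _ => h1 i
          _ = Y * ∑ i ∈ range m, ‖q‖ ^ i := by rw [Finset.mul_sum]
          _ ≤ Y * (1 - ‖q‖)⁻¹ := mul_le_mul_of_nonneg_left (geom_partial_le hq m) hY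

lemma summable_master (hq : ‖q‖ < 1) (A B : ℝ) (hB : 0 ≤ B) (f : ℕ → ℝ)
    (hf : ∀ k, ‖f k‖ ≤ A * B ^ k * ‖q‖ ^ (k * k)) : Summable f := by
  obtain ⟨N, hN1, hN⟩ := exists_pow_small hq B (1 / 2) (by norm_num)
  rw [← summable_nat_add_iff N]
  apply Summable.of_norm_bounded (g := fun n => |A| * (1 / 2 : ℝ) ^ n)
    ((summable_geometric_of_lt_one (by norm_num) (by norm_num)).mul_left _)
  intro n
  calc ‖f (n + N)‖ ≤ A * B ^ (n + N) * ‖q‖ ^ ((n + N) * (n + N)) := hf (n + N)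
    _ = A * (B * ‖q‖ ^ (n + N)) ^ (n + N) := by
        rw [mul_pow, pow_mul]
        ring
    _ ≤ |A| * (1 / 2) ^ (n + N) := by
        apply mul_le_mul (le_abs_self A) _ (by positivity) (abs_nonneg A)
        apply pow_le_pow_left₀ (by positivity)
        calc B * ‖q‖ ^ (n + N) ≤ B * ‖q‖ ^ N := by
              apply mul_le_mul_of_nonneg_left
                (pow_le_pow_of_le_one (norm_nonneg q) hq.le (by omega)) hB
          _ ≤ 1 / 2 := hN
    _ ≤ |A| * (1 / 2) ^ n := by
        apply mul_le_mul_of_nonneg_left _ (abs_nonneg A)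
        apply pow_le_pow_of_le_one (by norm_num) (by norm_num) (by omega)

lemma summable_shape (hq : ‖q‖ < 1) (y : ℂ) (W : ℝ) (hW : 0 ≤ W)
    (e m : ℕ → ℕ) (he : ∀ k, k * k ≤ e k) (f : ℕ → ℂ)
    (hf : ∀ k, ‖f k‖ ≤ ‖q‖ ^ (e k) * ‖y‖ ^ k * W * ‖qPoch q (y * q) (m k)‖ / ‖qPoch q q k‖) :
    Summable (fun k => ‖f k‖) := by
  obtain ⟨c, hc, hlow⟩ := exists_qq_lower hq
  set M := Real.exp (‖y‖ * (1 - ‖q‖)⁻¹) with hM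
  have hMpos : 0 < M := Real.exp_pos _
  apply summable_master hq (W * M / c) ‖y‖ (norm_nonneg y)
  intro k
  rw [Real.norm_of_nonneg (norm_nonneg (f k))]
  calc ‖f k‖ ≤ ‖q‖ ^ (e k) * ‖y‖ ^ k * W * ‖qPoch q (y * q) (m k)‖ / ‖qPoch q q k‖ := hf k
    _ ≤ ‖q‖ ^ (k * k) * ‖y‖ ^ k * W * M / c := by
        have h1 : ‖q‖ ^ (e k) ≤ ‖q‖ ^ (k * k) :=
          pow_le_pow_of_le_one (norm_nonneg q) hq.le (he k)
        have h2 : ‖qPoch q (y * q) (m k)‖ ≤ M := qPoch_shift_norm_le hq le_rfl (m k)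
        have h3 : c ≤ ‖qPoch q q k‖ := (hlow k).trans (qPoch_q_lower hq k)
        have hnum : ‖q‖ ^ (e k) * ‖y‖ ^ k * W * ‖qPoch q (y * q) (m k)‖
            ≤ ‖q‖ ^ (k * k) * ‖y‖ ^ k * W * M := by
          gcongr <;> positivity
        exact div_le_div₀ (by positivity) hnum hc h3
    _ = W * M / c * ‖y‖ ^ k * ‖q‖ ^ (k * k) := by ring

/-- main series (denominator cleared) -/
noncomputable def Tg (q y : ℂ) (k : ℕ) : ℂ :=
  (-1) ^ k * q ^ om k * y ^ k * (1 - y * q ^ (2 * k + 1)) * qPoch q (y * q) k / qPoch q q k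

noncomputable def Ta (q y : ℂ) (k : ℕ) : ℂ :=
  (-1) ^ k * q ^ om k * y ^ k * qPoch q (y * q) (k + 1) / qPoch q q k

noncomputable def Tb (q y : ℂ) (k : ℕ) : ℂ :=
  (-1) ^ k * q ^ (om k + k + 1) * y ^ (k + 1) * (1 - q ^ k) * qPoch q (y * q) k / qPoch q q k

noncomputable def Tc (q y : ℂ) (k : ℕ) : ℂ :=
  (-1) ^ k * q ^ om k * y ^ k * (1 - y ^ 2 * q ^ (4 * k + 4)) * qPoch q (y * q) (k + 1) /
    qPoch q q k

noncomputable def Tf (q y : ℂ) (k : ℕ) : ℂ :=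
  (-1) ^ k * q ^ om k * y ^ k * (1 - q ^ k) * qPoch q (y * q) (k + 1) / qPoch q q k

noncomputable def Ts (q y : ℂ) (k : ℕ) : ℂ :=
  (-1) ^ k * q ^ (om k + (3 * k + 2)) * y ^ (k + 1) * qPoch q (y * q) (k + 2) / qPoch q q k

lemma qPoch_succ (q a : ℂ) (k : ℕ) : qPoch q a (k + 1) = qPoch q a k * (1 - a * q ^ k) :=
  prod_range_succ _ _

lemma qPoch_first (q a : ℂ) (k : ℕ) : qPoch q a (k + 1) = qPoch q (a * q) k * (1 - a) := by
  rw [qPoch, prod_range_succ']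
  congr 1
  · exact Finset.prod_congr rfl fun i _ => by rw [pow_succ]; ring
  · simp

section FEsec

variable {q : ℂ}

lemma norm_one_sub_le (y : ℂ) {a : ℂ} (W : ℝ) (h : ‖a‖ ≤ W) : ‖(1 : ℂ) - a‖ ≤ 1 + W := by
  calc ‖(1 : ℂ) - a‖ ≤ ‖(1 : ℂ)‖ + ‖a‖ := norm_sub_le _ _
    _ ≤ 1 + W := by rw [norm_one]; linarith

lemma norm_pow_le_one (hq : ‖q‖ < 1) (j : ℕ) : ‖q‖ ^ j ≤ 1 :=
  pow_le_one₀ (norm_nonneg q) hq.le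

lemma Sg (hq : ‖q‖ < 1) (y : ℂ) : Summable fun k => ‖Tg q y k‖ := by
  apply summable_shape hq y (1 + ‖y‖) (by positivity) om (fun k => k) om_ge
  intro k
  simp only [Tg, norm_div, norm_mul, norm_pow, norm_neg, norm_one, one_pow, one_mul]
  have hW : ‖(1 : ℂ) - y * q ^ (2 * k + 1)‖ ≤ 1 + ‖y‖ := by
    calc ‖(1 : ℂ) - y * q ^ (2 * k + 1)‖ ≤ 1 + ‖y * q ^ (2 * k + 1)‖ := norm_one_sub_le y _ le_rfl
      _ ≤ 1 + ‖y‖ := by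
          rw [norm_mul, norm_pow]
          have := norm_pow_le_one hq (2 * k + 1)
          nlinarith [norm_nonneg y]
  gcongr

lemma Sa (hq : ‖q‖ < 1) (y : ℂ) : Summable fun k => ‖Ta q y k‖ := by
  apply summable_shape hq y 1 one_pos.le om (fun k => k + 1) om_ge
  intro k
  simp only [Ta, norm_div, norm_mul, norm_pow, norm_neg, norm_one, one_pow, one_mul, mul_one]
  exact le_of_eq (by ring)

lemma Sb (hq : ‖q‖ < 1) (y : ℂ) : Summable fun k => ‖Tb q y k‖ := by
  apply summable_shape hq y (‖y‖ * 2) (by positivity) (fun k => om k + k + 1) (fun k => k)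
    (fun k => by show k * k ≤ om k + k + 1; have := om_ge k; omega)
  intro k
  simp only [Tb, norm_div, norm_mul, norm_pow, norm_neg, norm_one, one_pow, one_mul]
  rw [pow_succ]
  have h2 : ‖(1 : ℂ) - q ^ k‖ ≤ 2 := by
    have := norm_one_sub_le y (W := 1) (a := q ^ k) (by rw [norm_pow]; exact norm_pow_le_one hq k)
    linarith
  calc ‖q‖ ^ (om k + k + 1) * (‖y‖ ^ k * ‖y‖) * ‖(1 : ℂ) - q ^ k‖ * ‖qPoch q (y * q) k‖ /
        ‖qPoch q q k‖
      ≤ ‖q‖ ^ (om k + k + 1) * (‖y‖ ^ k * ‖y‖) * 2 * ‖qPoch q (y * q) k‖ / ‖qPoch q q k‖ := by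
        gcongr
      _ = ‖q‖ ^ (om k + k + 1) * ‖y‖ ^ k * (‖y‖ * 2) * ‖qPoch q (y * q) k‖ / ‖qPoch q q k‖ := by
        ring

lemma Sc (hq : ‖q‖ < 1) (y : ℂ) : Summable fun k => ‖Tc q y k‖ := by
  apply summable_shape hq y (1 + ‖y‖ ^ 2) (by positivity) om (fun k => k + 1) om_ge
  intro k
  simp only [Tc, norm_div, norm_mul, norm_pow, norm_neg, norm_one, one_pow, one_mul]
  have hW : ‖(1 : ℂ) - y ^ 2 * q ^ (4 * k + 4)‖ ≤ 1 + ‖y‖ ^ 2 := by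
    calc ‖(1 : ℂ) - y ^ 2 * q ^ (4 * k + 4)‖ ≤ 1 + ‖y ^ 2 * q ^ (4 * k + 4)‖ :=
          norm_one_sub_le y _ le_rfl
      _ ≤ 1 + ‖y‖ ^ 2 := by
          rw [norm_mul, norm_pow, norm_pow]
          have := norm_pow_le_one hq (4 * k + 4)
          nlinarith [norm_nonneg y, pow_nonneg (norm_nonneg y) 2]
  gcongr

lemma Sf (hq : ‖q‖ < 1) (y : ℂ) : Summable fun k => ‖Tf q y k‖ := by
  apply summable_shape hq y 2 (by norm_num) om (fun k => k + 1) om_ge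
  intro k
  simp only [Tf, norm_div, norm_mul, norm_pow, norm_neg, norm_one, one_pow, one_mul]
  have hW : ‖(1 : ℂ) - q ^ k‖ ≤ 2 := by
    have := norm_one_sub_le y (W := 1) (a := q ^ k) (by rw [norm_pow]; exact norm_pow_le_one hq k)
    linarith
  gcongr

lemma Ss (hq : ‖q‖ < 1) (y : ℂ) : Summable fun k => ‖Ts q y k‖ := by
  apply summable_shape hq y ‖y‖ (norm_nonneg y) (fun k => om k + (3 * k + 2)) (fun k => k + 2)
    (fun k => by show k * k ≤ om k + (3 * k + 2); have := om_ge k; omega)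
  intro k
  simp only [Ts, norm_div, norm_mul, norm_pow, norm_neg, norm_one, one_pow, one_mul]
  rw [pow_succ]
  apply le_of_eq
  ring

lemma F1 (hq : ‖q‖ < 1) (y : ℂ) (k : ℕ) : Tg q y k = Ta q y k + Tb q y k := by
  simp only [Tg, Ta, Tb, qPoch_succ]
  have h := qPoch_q_ne hq k
  field_simp
  ring

lemma F4 (hq : ‖q‖ < 1) (y : ℂ) (k : ℕ) : Ta q y k + Tb q y (k + 1) = Tc q y k := by
  simp only [Ta, Tb, Tc, om_succ, qPoch_succ (a := q)]
  have h := qPoch_q_ne hq k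
  have h2 := qfac_ne hq k
  field_simp
  ring

lemma F5 (hq : ‖q‖ < 1) (y : ℂ) (k : ℕ) :
    Tc q y k = (1 - y * q) * Tg q (y * q) k + Tf q y k + Ts q y k := by
  simp only [Tc, Tg, Tf, Ts]
  rw [show qPoch q (y * q) (k + 2) = qPoch q (y * q) (k + 1) * (1 - y * q * q ^ (k + 1)) from
    qPoch_succ _ _ (k + 1)]
  rw [qPoch_first q (y * q) k]
  have h := qPoch_q_ne hq k
  field_simp
  ring

lemma F6 (hq : ‖q‖ < 1) (y : ℂ) (k : ℕ) : Tf q y (k + 1) = -Ts q y k := by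
  simp only [Tf, Ts, om_succ, qPoch_succ (a := q)]
  have h := qPoch_q_ne hq k
  have h2 := qfac_ne hq k
  field_simp
  ring

lemma Tf_zero (q y : ℂ) : Tf q y 0 = 0 := by simp [Tf]

lemma Tb_zero (q y : ℂ) : Tb q y 0 = 0 := by simp [Tb]

lemma FE (hq : ‖q‖ < 1) (y : ℂ) :
    ∑' k, Tg q y k = (1 - y * q) * ∑' k, Tg q (y * q) k := by
  have hSg := (Sg hq y).of_norm
  have hSa := (Sa hq y).of_norm
  have hSb := (Sb hq y).of_norm
  have hSc := (Sc hq y).of_norm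
  have hSf := (Sf hq y).of_norm
  have hSs := (Ss hq y).of_norm
  have hSg' := (Sg hq (y * q)).of_norm
  have hSd : Summable fun k => (1 - y * q) * Tg q (y * q) k := hSg'.mul_left _
  have hSb1 : Summable fun k => Tb q y (k + 1) := (summable_nat_add_iff 1).2 hSb
  have hSf1 : Summable fun k => Tf q y (k + 1) := (summable_nat_add_iff 1).2 hSf
  have e1 : ∑' k, Tg q y k = ∑' k, Ta q y k + ∑' k, Tb q y k := by
    rw [← Summable.tsum_add hSa hSb]
    exact tsum_congr fun k => F1 hq y k
  have e2 : ∑' k, Tb q y k = ∑' k, Tb q y (k + 1) := by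
    rw [Summable.tsum_eq_zero_add hSb, Tb_zero, zero_add]
  have e3 : ∑' k, Ta q y k + ∑' k, Tb q y (k + 1) = ∑' k, Tc q y k := by
    rw [← Summable.tsum_add hSa hSb1]
    exact tsum_congr fun k => F4 hq y k
  have e4 : ∑' k, Tc q y k
      = ∑' k, (1 - y * q) * Tg q (y * q) k + (∑' k, Tf q y k + ∑' k, Ts q y k) := by
    rw [← Summable.tsum_add hSf hSs, ← Summable.tsum_add hSd (hSf.add hSs)]
    exact tsum_congr fun k => by rw [F5 hq y k]; ring
  have e5 : ∑' k, Tf q y k + ∑' k, Ts q y k = 0 := by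
    have : ∑' k, Tf q y k = -∑' k, Ts q y k := by
      rw [Summable.tsum_eq_zero_add hSf, Tf_zero, zero_add]
      rw [show (fun k => Tf q y (k + 1)) = fun k => -Ts q y k from funext fun k => F6 hq y k]
      exact tsum_neg
    rw [this]
    ring
  rw [e1, e2, e3, e4, e5, add_zero, tsum_mul_left]

lemma Tg_zero (q y : ℂ) : Tg q y 0 = 1 - y * q := by
  simp [Tg, om, qPoch]

lemma iterate_FE (hq : ‖q‖ < 1) (x : ℂ) (n : ℕ) :
    ∑' k, Tg q x k = qPoch q (x * q) n * ∑' k, Tg q (x * q ^ n) k := by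
  induction n with
  | zero => simp [qPoch]
  | succ n ih =>
    rw [ih, FE hq (x * q ^ n), qPoch_succ]
    have harg : ∀ k : ℕ, Tg q (x * q ^ n * q) k = Tg q (x * q ^ (n + 1)) k := by
      intro k
      congr 1
      rw [pow_succ]
      ring
    rw [tsum_congr harg]
    ring

lemma tendsto_partial (hq : ‖q‖ < 1) (y : ℂ) (h0 : ∀ i : ℕ, (1 : ℂ) - y * q ^ i ≠ 0) :
    Tendsto (fun n => qPoch q y n) atTop (𝓝 (qPochInf q y)) := by
  have := (multipliable_aux hq y h0).hasProd.tendsto_prod_nat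
  simpa [qPoch, qPochInf] using this

lemma tendsto_G (hq : ‖q‖ < 1) (x : ℂ) :
    Tendsto (fun n => ∑' k, Tg q (x * q ^ n) k) atTop (𝓝 1) := by
  obtain ⟨c, hc, hlow⟩ := exists_qq_lower hq
  set M := Real.exp (‖x‖ * (1 - ‖q‖)⁻¹) with hM
  have hMpos : 0 < M := Real.exp_pos _
  set C := (1 + ‖x‖) * M / c with hC
  have hCpos : 0 < C := by positivity
  set h : ℕ → ℝ := fun k => ‖q‖ ^ om (k + 1) * ‖x‖ ^ (k + 1) * C with hh
  have hsumh : Summable h := by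
    apply summable_master hq (‖x‖ * C) ‖x‖ (norm_nonneg x)
    intro k
    have hnn : 0 ≤ h k := by positivity
    rw [Real.norm_of_nonneg hnn, hh]
    have hom : k * k ≤ om (k + 1) :=
      le_trans (Nat.mul_le_mul (Nat.le_succ k) (Nat.le_succ k)) (om_ge (k + 1))
    calc ‖q‖ ^ om (k + 1) * ‖x‖ ^ (k + 1) * C
        ≤ ‖q‖ ^ (k * k) * ‖x‖ ^ (k + 1) * C := by
          exact mul_le_mul_of_nonneg_right (mul_le_mul_of_nonneg_right
            (pow_le_pow_of_le_one (norm_nonneg q) hq.le hom) (by positivity)) hCpos.le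
      _ = ‖x‖ * C * ‖x‖ ^ k * ‖q‖ ^ (k * k) := by rw [pow_succ]; ring
  have hyx : ∀ n : ℕ, ‖x * q ^ n‖ ≤ ‖x‖ := by
    intro n
    rw [norm_mul, norm_pow]
    calc ‖x‖ * ‖q‖ ^ n ≤ ‖x‖ * 1 :=
          mul_le_mul_of_nonneg_left (norm_pow_le_one hq n) (norm_nonneg x)
      _ = ‖x‖ := mul_one _
  have hterm : ∀ n k : ℕ, ‖Tg q (x * q ^ n) (k + 1)‖ ≤ h k * ‖q‖ ^ n := by
    intro n k
    simp only [Tg, norm_div, norm_mul, norm_pow, norm_neg, norm_one, one_pow, one_mul]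
    have h1 : (‖x‖ * ‖q‖ ^ n) ^ (k + 1) ≤ ‖x‖ ^ (k + 1) * ‖q‖ ^ n := by
      rw [mul_pow, ← pow_mul]
      apply mul_le_mul_of_nonneg_left _ (by positivity)
      exact pow_le_pow_of_le_one (norm_nonneg q) hq.le (Nat.le_mul_of_pos_right n (by omega))
    have h2 : ‖(1 : ℂ) - x * q ^ n * q ^ (2 * (k + 1) + 1)‖ ≤ 1 + ‖x‖ := by
      apply norm_one_sub_le (x * q ^ n)
      rw [norm_mul]
      calc ‖x * q ^ n‖ * ‖q ^ (2 * (k + 1) + 1)‖ ≤ ‖x‖ * 1 := by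
            apply mul_le_mul (hyx n) _ (norm_nonneg _) (norm_nonneg x)
            rw [norm_pow]
            exact norm_pow_le_one hq _
        _ = ‖x‖ := mul_one _
    have h3 : ‖qPoch q (x * q ^ n * q) (k + 1)‖ ≤ M :=
      qPoch_shift_norm_le hq (hyx n) (k + 1)
    have h4 : c ≤ ‖qPoch q q (k + 1)‖ := (hlow (k + 1)).trans (qPoch_q_lower hq (k + 1))
    have hnum : ‖q‖ ^ om (k + 1) * (‖x‖ * ‖q‖ ^ n) ^ (k + 1) *
          ‖(1 : ℂ) - x * q ^ n * q ^ (2 * (k + 1) + 1)‖ * ‖qPoch q (x * q ^ n * q) (k + 1)‖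
        ≤ ‖q‖ ^ om (k + 1) * (‖x‖ ^ (k + 1) * ‖q‖ ^ n) * (1 + ‖x‖) * M := by
      gcongr <;> positivity
    calc ‖q‖ ^ om (k + 1) * (‖x‖ * ‖q‖ ^ n) ^ (k + 1) *
          ‖(1 : ℂ) - x * q ^ n * q ^ (2 * (k + 1) + 1)‖ * ‖qPoch q (x * q ^ n * q) (k + 1)‖ /
          ‖qPoch q q (k + 1)‖
        ≤ ‖q‖ ^ om (k + 1) * (‖x‖ ^ (k + 1) * ‖q‖ ^ n) * (1 + ‖x‖) * M / c :=
          div_le_div₀ (by positivity) hnum hc h4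
      _ = h k * ‖q‖ ^ n := by rw [hh, hC]; ring
  have hsplit : ∀ n : ℕ, ∑' k, Tg q (x * q ^ n) k
      = (1 - x * q ^ n * q) + ∑' k, Tg q (x * q ^ n) (k + 1) := by
    intro n
    rw [Summable.tsum_eq_zero_add (Sg hq (x * q ^ n)).of_norm, Tg_zero]
  have hT1 : Tendsto (fun n : ℕ => (1 : ℂ) - x * q ^ n * q) atTop (𝓝 1) := by
    have hq0 : Tendsto (fun n : ℕ => q ^ n) atTop (𝓝 0) :=
      tendsto_pow_atTop_nhds_zero_of_norm_lt_one hq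
    have := (hq0.const_mul x).mul_const q
    rw [mul_zero, zero_mul] at this
    have h2 : Tendsto (fun n : ℕ => (1 : ℂ) - x * q ^ n * q) atTop (𝓝 (1 - 0)) :=
      Tendsto.sub tendsto_const_nhds this
    simpa using h2
  have hT2 : Tendsto (fun n : ℕ => ∑' k, Tg q (x * q ^ n) (k + 1)) atTop (𝓝 0) := by
    apply squeeze_zero_norm (a := fun n => (∑' k, h k) * ‖q‖ ^ n)
    · intro n
      have hs1 : Summable fun k => ‖Tg q (x * q ^ n) (k + 1)‖ :=
        (summable_nat_add_iff 1).2 (Sg hq (x * q ^ n))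
      calc ‖∑' k, Tg q (x * q ^ n) (k + 1)‖ ≤ ∑' k, ‖Tg q (x * q ^ n) (k + 1)‖ :=
            norm_tsum_le_tsum_norm hs1
        _ ≤ ∑' k, h k * ‖q‖ ^ n := Summable.tsum_le_tsum (hterm n) hs1 (hsumh.mul_right _)
        _ = (∑' k, h k) * ‖q‖ ^ n := tsum_mul_right
    · have := (tendsto_pow_atTop_nhds_zero_of_lt_one (norm_nonneg q) hq).const_mul (∑' k, h k)
      simpa using this
  have := hT1.add hT2
  rw [add_zero] at this
  apply Tendsto.congr (fun n => (hsplit n).symm) this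

end FEsec

end SylAux

section Main

open SylAux

lemma SylAux.G_eq {q : ℂ} (hq : ‖q‖ < 1) (x : ℂ)
    (h0 : ∀ i : ℕ, (1 : ℂ) - x * q * q ^ i ≠ 0) :
    ∑' k, Tg q x k = qPochInf q (x * q) := by
  have h1 : Tendsto (fun n => qPoch q (x * q) n * ∑' k, Tg q (x * q ^ n) k) atTop
      (𝓝 (qPochInf q (x * q) * 1)) :=
    (tendsto_partial hq (x * q) h0).mul (tendsto_G hq x)
  have h2 : (fun n => qPoch q (x * q) n * ∑' k, Tg q (x * q ^ n) k)
      = fun _ => ∑' k, Tg q x k := funext fun n => (iterate_FE hq x n).symm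
  rw [h2] at h1
  have := tendsto_nhds_unique tendsto_const_nhds h1
  rw [this, mul_one]


/-- Sylvester's identity. -/
theorem sylvester_identity (q x : ℂ) (hq : ‖q‖ < 1)
    (hx : ∀ j : ℕ, 1 ≤ j → x * q ^ j ≠ 1) :
    Summable (fun k : ℕ =>
      ‖(-1 : ℂ) ^ k * q ^ (k * (3 * k + 1) / 2) * x ^ k * (1 - x * q ^ (2 * k + 1)) /
        (qPoch q q k * qPochInf q (x * q ^ (k + 1)))‖) ∧
    (∑' k : ℕ, (-1 : ℂ) ^ k * q ^ (k * (3 * k + 1) / 2) * x ^ k * (1 - x * q ^ (2 * k + 1)) /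
        (qPoch q q k * qPochInf q (x * q ^ (k + 1)))) = 1 := by
  have h0 : ∀ i : ℕ, (1 : ℂ) - x * q * q ^ i ≠ 0 := by
    intro i
    rw [show x * q * q ^ i = x * q ^ (i + 1) by rw [pow_succ]; ring]
    exact sub_ne_zero.mpr (Ne.symm (hx (i + 1) (by omega)))
  have hP1 : qPochInf q (x * q) ≠ 0 := qPochInf_ne_zero hq (x * q) h0
  have hterm_eq : ∀ k : ℕ,
      (-1 : ℂ) ^ k * q ^ (k * (3 * k + 1) / 2) * x ^ k * (1 - x * q ^ (2 * k + 1)) /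
        (qPoch q q k * qPochInf q (x * q ^ (k + 1)))
      = Tg q x k / qPochInf q (x * q) := by
    intro k
    have hshift : qPochInf q (x * q) = qPoch q (x * q) k * qPochInf q (x * q ^ (k + 1)) := by
      have := qPochInf_shift hq (x * q) h0 k
      rwa [show x * q * q ^ k = x * q ^ (k + 1) by rw [pow_succ]; ring] at this
    have hPk : qPochInf q (x * q ^ (k + 1)) ≠ 0 := by
      apply qPochInf_ne_zero hq
      intro i
      rw [show x * q ^ (k + 1) * q ^ i = x * q ^ (k + 1 + i) by rw [pow_add]; ring]
      exact sub_ne_zero.mpr (Ne.symm (hx (k + 1 + i) (by omega)))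
    have hP1k : qPoch q (x * q) k ≠ 0 :=
      Finset.prod_ne_zero_iff.2 fun i _ => h0 i
    have hQk : qPoch q q k ≠ 0 := qPoch_q_ne hq k
    rw [Tg, hshift]
    show _ = (-1 : ℂ) ^ k * q ^ om k * x ^ k * (1 - x * q ^ (2 * k + 1)) * qPoch q (x * q) k /
      qPoch q q k / (qPoch q (x * q) k * qPochInf q (x * q ^ (k + 1)))
    rw [show om k = k * (3 * k + 1) / 2 from rfl]
    field_simp
  constructor
  · have hrw : (fun k : ℕ =>
        ‖(-1 : ℂ) ^ k * q ^ (k * (3 * k + 1) / 2) * x ^ k * (1 - x * q ^ (2 * k + 1)) /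
          (qPoch q q k * qPochInf q (x * q ^ (k + 1)))‖)
        = fun k => ‖Tg q x k‖ / ‖qPochInf q (x * q)‖ :=
      funext fun k => by rw [hterm_eq k, norm_div]
    rw [hrw]
    exact (Sg hq x).div_const _
  · calc (∑' k : ℕ, (-1 : ℂ) ^ k * q ^ (k * (3 * k + 1) / 2) * x ^ k *
          (1 - x * q ^ (2 * k + 1)) / (qPoch q q k * qPochInf q (x * q ^ (k + 1))))
        = ∑' k : ℕ, Tg q x k / qPochInf q (x * q) := tsum_congr hterm_eq
      _ = (∑' k : ℕ, Tg q x k) / qPochInf q (x * q) := tsum_div_const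
      _ = qPochInf q (x * q) / qPochInf q (x * q) := by rw [SylAux.G_eq hq x h0]
      _ = 1 := div_self hP1

end Main
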